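/- (von Bahr–Esseen inequality) Let 1 ≤ r ≤ 2 and let X_1, …, X_n be independent real-valued random variables on a common probability space with E[X_k] = 0 and E[|X_k|^r] < ∞ for each k. Then E[|X_1 + ⋯ + X_n|^r] ≤ 2 · Σ_{k=1}^n E[|X_k|^r]. -/

import Mathlib

open MeasureTheory ProbabilityTheory

private lemma vbe_rpow_subadd {p : ℝ} (hp0 : 0 ≤ p) (hp1 : p ≤ 1) {a b : ℝ}
    (ha : 0 ≤ a) (hb : 0 ≤ b) : (a + b) ^ p ≤ a ^ p + b ^ p := by
  have h := NNReal.rpow_add_le_add_rpow a.toNNReal b.toNNReal hp0 hp1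
  have h2 := NNReal.coe_le_coe.2 h
  push_cast at h2
  rwa [Real.coe_toNNReal a ha, Real.coe_toNNReal b hb] at h2

private lemma vbe_caseI {r : ℝ} (hr1 : 1 ≤ r) (hr2 : r ≤ 2) {t : ℝ} (ht : 0 ≤ t) :
    (1 + t) ^ r ≤ 1 + r * t + t ^ r := by
  have hr0 : (0:ℝ) < r := by linarith
  set g : ℝ → ℝ := fun t => 1 + r * t + t ^ r - (1 + t) ^ r with hgdef
  have hd : ∀ x : ℝ, HasDerivAt g (r + r * x ^ (r-1) - 1 * r * (1+x) ^ (r-1)) x := by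
    intro x
    have h1 : HasDerivAt (fun x : ℝ => x ^ r) (r * x ^ (r-1)) x :=
      Real.hasDerivAt_rpow_const (Or.inr hr1)
    have h2 : HasDerivAt (fun x : ℝ => (1+x) ^ r) (1 * r * (1+x) ^ (r-1)) x :=
      ((hasDerivAt_id x).const_add 1).rpow_const (Or.inr hr1)
    have h3 : HasDerivAt (fun x : ℝ => 1 + r * x) r x := by
      simpa using ((hasDerivAt_id' x).const_mul r).const_add 1
    have := (h3.add h1).sub h2
    exact this
  have mono : MonotoneOn g (Set.Ici (0:ℝ)) := by
    apply monotoneOn_of_deriv_nonneg (convex_Ici 0)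
    · exact fun x _ => ((hd x).continuousAt).continuousWithinAt
    · exact fun x _ => ((hd x).differentiableAt).differentiableWithinAt
    · intro x hx
      rw [interior_Ici] at hx
      rw [(hd x).deriv]
      have hx0 : (0:ℝ) ≤ x := le_of_lt hx
      have hsub : (1 + x) ^ (r-1) ≤ 1 + x ^ (r-1) := by
        have := vbe_rpow_subadd (p := r-1) (by linarith) (by linarith) zero_le_one hx0
        simpa [Real.one_rpow] using this
      have := mul_le_mul_of_nonneg_left hsub hr0.le
      linarith
  have h0 : g 0 = 0 := by
    simp [hgdef, Real.zero_rpow hr0.ne', Real.one_rpow]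
  have := mono Set.self_mem_Ici (Set.mem_Ici.2 ht) ht
  rw [h0] at this
  simp only [hgdef] at this
  linarith

private lemma vbe_caseII {r : ℝ} (hr1 : 1 ≤ r) (hr2 : r ≤ 2) {s : ℝ} (hs0 : 0 ≤ s) (hs1 : s ≤ 1) :
    (1 - s) ^ r ≤ 1 - r * s + 2 * s ^ r := by
  have hr0 : (0:ℝ) < r := by linarith
  set h : ℝ → ℝ := fun s => 1 - r * s + 2 * s ^ r - (1 - s) ^ r with hhdef
  have hd : ∀ x : ℝ, HasDerivAt h (-r + 2 * (r * x ^ (r-1)) - -1 * r * (1-x) ^ (r-1)) x := by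
    intro x
    have h1 : HasDerivAt (fun x : ℝ => 2 * x ^ r) (2 * (r * x ^ (r-1))) x :=
      (Real.hasDerivAt_rpow_const (Or.inr hr1)).const_mul 2
    have h2 : HasDerivAt (fun x : ℝ => (1-x) ^ r) (-1 * r * (1-x) ^ (r-1)) x := by
      have hin : HasDerivAt (fun x : ℝ => 1 - x) (-1) x := by
        exact (hasDerivAt_id' x).const_sub 1
      exact hin.rpow_const (Or.inr hr1)
    have h3 : HasDerivAt (fun x : ℝ => 1 - r * x) (-r) x := by
      simpa using ((hasDerivAt_id' x).const_mul r).const_sub 1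
    have := (h3.add h1).sub h2
    exact this
  have mono : MonotoneOn h (Set.Icc (0:ℝ) 1) := by
    apply monotoneOn_of_deriv_nonneg (convex_Icc 0 1)
    · exact fun x _ => ((hd x).continuousAt).continuousWithinAt
    · exact fun x _ => ((hd x).differentiableAt).differentiableWithinAt
    · intro x hx
      rw [interior_Icc] at hx
      rw [(hd x).deriv]
      have hx0 : (0:ℝ) ≤ x := le_of_lt hx.1
      have h1x : (0:ℝ) ≤ 1 - x := by linarith [hx.2]
      have hsub : (1:ℝ) ≤ x ^ (r-1) + (1-x) ^ (r-1) := by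
        have := vbe_rpow_subadd (p := r-1) (by linarith) (by linarith) hx0 h1x
        have e : x + (1 - x) = 1 := by ring
        rw [e, Real.one_rpow] at this
        exact this
      have hxr : (0:ℝ) ≤ x ^ (r-1) := Real.rpow_nonneg hx0 _
      have := mul_le_mul_of_nonneg_left hsub hr0.le
      nlinarith [Real.rpow_nonneg h1x (r-1)]
  have h0 : h 0 = 0 := by
    simp [hhdef, Real.zero_rpow hr0.ne', Real.one_rpow]
  have := mono (Set.mem_Icc.2 ⟨le_refl 0, zero_le_one⟩) (Set.mem_Icc.2 ⟨hs0, hs1⟩) hs0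
  rw [h0] at this
  simp only [hhdef] at this
  linarith

private lemma vbe_core {r : ℝ} (hr1 : 1 ≤ r) (hr2 : r ≤ 2) (t : ℝ) :
    |1 + t| ^ r ≤ 1 + r * t + 2 * |t| ^ r := by
  have hr0 : (0:ℝ) < r := by linarith
  rcases le_or_gt 0 t with ht | ht
  · rw [abs_of_nonneg (by linarith), abs_of_nonneg ht]
    have h := vbe_caseI hr1 hr2 ht
    have h2 : 0 ≤ t ^ r := Real.rpow_nonneg ht r
    linarith
  rcases le_or_gt (-1) t with ht1 | ht1
  · have h := vbe_caseII hr1 hr2 (s := -t) (by linarith) (by linarith)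
    rw [abs_of_nonneg (by linarith), abs_of_neg ht]
    rw [show (1:ℝ) + t = 1 - (-t) by ring]
    linarith
  · rw [abs_of_neg (by linarith : 1 + t < 0), abs_of_neg ht]
    have h1 : (-(1+t)) ^ r ≤ (-t) ^ r :=
      Real.rpow_le_rpow (by linarith) (by linarith) hr0.le
    have h2 : 1 + r * (-t - 1) ≤ (-t) ^ r := by
      have := one_add_mul_self_le_rpow_one_add (s := -t - 1) (by linarith) hr1
      rwa [show (1:ℝ) + (-t - 1) = -t by ring] at this
    linarith

private lemma vbe_aux_pos {r : ℝ} (hr1 : 1 ≤ r) (hr2 : r ≤ 2) {x : ℝ} (hx : 0 < x) (y : ℝ) :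
    |x + y| ^ r ≤ x ^ r + r * x ^ (r - 1) * y + 2 * |y| ^ r := by
  have hxr : (0:ℝ) < x ^ r := Real.rpow_pos_of_pos hx r
  have key := vbe_core hr1 hr2 (y / x)
  have hxy : x * (1 + y / x) = x + y := by field_simp
  have hyx : x * (y / x) = y := by field_simp
  have e1 : |x + y| ^ r = x ^ r * |1 + y / x| ^ r := by
    rw [← Real.mul_rpow hx.le (abs_nonneg _), ← abs_of_pos hx, ← abs_mul, abs_of_pos hx, hxy]
  have e2 : |y| ^ r = x ^ r * |y / x| ^ r := by
    rw [← Real.mul_rpow hx.le (abs_nonneg _), ← abs_of_pos hx, ← abs_mul, abs_of_pos hx, hyx]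
  have e3 : x ^ r * (y / x) = x ^ (r-1) * y := by
    rw [show x ^ r = x ^ (r-1) * x from by rw [← Real.rpow_add_one hx.ne']; norm_num]
    rw [mul_assoc, hyx]
  rw [e1, e2]
  calc x ^ r * |1 + y / x| ^ r ≤ x ^ r * (1 + r * (y / x) + 2 * |y / x| ^ r) :=
        mul_le_mul_of_nonneg_left key hxr.le
    _ = x ^ r + r * (x ^ r * (y / x)) + 2 * (x ^ r * |y/x| ^ r) := by ring
    _ = x ^ r + r * x ^ (r-1) * y + 2 * (x ^ r * |y/x| ^ r) := by rw [e3]; ring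

private lemma vbe_pointwise {r : ℝ} (hr1 : 1 ≤ r) (hr2 : r ≤ 2) (x y : ℝ) :
    |x + y| ^ r ≤ |x| ^ r + r * Real.sign x * |x| ^ (r - 1) * y + 2 * |y| ^ r := by
  have hr0 : (0:ℝ) < r := by linarith
  rcases lt_trichotomy x 0 with hx | rfl | hx
  · have h := vbe_aux_pos hr1 hr2 (x := -x) (by linarith) (-y)
    rw [show -x + -y = -(x + y) by ring, abs_neg, abs_neg] at h
    rw [Real.sign_of_neg hx, abs_of_neg hx]
    have e : r * -1 * (-x) ^ (r-1) * y = -(r * (-x) ^ (r-1) * y) := by ring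
    rw [e]
    linarith
  · rw [Real.sign_zero, abs_zero, Real.zero_rpow hr0.ne', zero_add]
    have := Real.rpow_nonneg (abs_nonneg y) r
    simp only [mul_zero, zero_mul, zero_add]
    linarith
  · rw [Real.sign_of_pos hx, abs_of_pos hx, mul_one]
    exact vbe_aux_pos hr1 hr2 hx y


private lemma vbe_rpow_add_bound {r : ℝ} (hr1 : 1 ≤ r) (a b : ℝ) :
    |a + b| ^ r ≤ 2 ^ r * (|a| ^ r + |b| ^ r) := by
  have hr0 : (0:ℝ) ≤ r := by linarith
  have h1 : |a + b| ≤ 2 * max |a| |b| := by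
    rcases abs_add_le a b |>.trans (add_le_add (le_max_left |a| |b|) (le_max_right |a| |b|)) with h
    linarith [abs_add_le a b, le_max_left |a| |b|, le_max_right |a| |b|]
  have h2 : |a + b| ^ r ≤ (2 * max |a| |b|) ^ r :=
    Real.rpow_le_rpow (abs_nonneg _) h1 hr0
  have h3 : (2 * max |a| |b|) ^ r = 2 ^ r * (max |a| |b|) ^ r :=
    Real.mul_rpow (by norm_num) (le_max_of_le_left (abs_nonneg a))
  have h4 : (max |a| |b|) ^ r ≤ |a| ^ r + |b| ^ r := by
    rcases max_cases |a| |b| with ⟨h, _⟩ | ⟨h, _⟩ <;> rw [h]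
    · linarith [Real.rpow_nonneg (abs_nonneg b) r]
    · linarith [Real.rpow_nonneg (abs_nonneg a) r]
  calc |a + b| ^ r ≤ 2 ^ r * (max |a| |b|) ^ r := by rw [← h3]; exact h2
    _ ≤ 2 ^ r * (|a| ^ r + |b| ^ r) :=
        mul_le_mul_of_nonneg_left h4 (Real.rpow_nonneg (by norm_num) r)

private lemma vbe_cont_rpow {r : ℝ} (hr1 : 1 ≤ r) : Continuous (fun x : ℝ => x ^ r) :=
  continuous_iff_continuousAt.2 fun x =>
    Real.continuousAt_rpow_const x r (Or.inr (by linarith))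

private lemma vbe_step {Ω : Type*} [MeasurableSpace Ω] (μ : Measure Ω) [IsProbabilityMeasure μ]
    {r : ℝ} (hr1 : 1 ≤ r) (hr2 : r ≤ 2) {f g : Ω → ℝ}
    (hf : Measurable f) (hg : Measurable g)
    (hfg : IndepFun f g μ) (hgmean : ∫ ω, g ω ∂μ = 0) (hgi : Integrable g μ)
    (hfr : Integrable (fun ω => |f ω| ^ r) μ) (hgr : Integrable (fun ω => |g ω| ^ r) μ) :
    ∫ ω, |f ω + g ω| ^ r ∂μ ≤ ∫ ω, |f ω| ^ r ∂μ + 2 * ∫ ω, |g ω| ^ r ∂μ := by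
  set ν₁ : Measure ℝ := μ.map f with hν₁
  set ν₂ : Measure ℝ := μ.map g with hν₂
  haveI : IsProbabilityMeasure ν₁ := Measure.isProbabilityMeasure_map hf.aemeasurable
  haveI : IsProbabilityMeasure ν₂ := Measure.isProbabilityMeasure_map hg.aemeasurable
  have hmap : μ.map (fun ω => (f ω, g ω)) = ν₁.prod ν₂ :=
    (indepFun_iff_map_prod_eq_prod_map_map hf.aemeasurable hg.aemeasurable).mp hfg
  have hcr : Continuous (fun x : ℝ => |x| ^ r) := (vbe_cont_rpow hr1).comp continuous_abs
  have hmeasF : Measurable (fun p : ℝ × ℝ => |p.1 + p.2| ^ r) :=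
    (hcr.comp (continuous_fst.add continuous_snd)).measurable
  -- marginal integrabilities
  have hν₁r : Integrable (fun x => |x| ^ r) ν₁ :=
    (integrable_map_measure hcr.aestronglyMeasurable hf.aemeasurable).mpr hfr
  have hν₂r : Integrable (fun x => |x| ^ r) ν₂ :=
    (integrable_map_measure hcr.aestronglyMeasurable hg.aemeasurable).mpr hgr
  have hν₂id : Integrable (fun y : ℝ => y) ν₂ :=
    (integrable_map_measure aestronglyMeasurable_id hg.aemeasurable).mpr hgi
  have hν₂mean : ∫ y, y ∂ν₂ = 0 := by
    have h : ∫ y, y ∂(μ.map g) = ∫ ω, g ω ∂μ :=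
      integral_map hg.aemeasurable aestronglyMeasurable_id
    rw [hν₂, h]
    exact hgmean
  -- integrability on the product
  have hfst : Integrable (fun p : ℝ × ℝ => |p.1| ^ r) (ν₁.prod ν₂) := by
    have hmfst : (ν₁.prod ν₂).map Prod.fst = ν₁ := by
      rw [Measure.map_fst_prod]; simp
    have := (integrable_map_measure hcr.aestronglyMeasurable measurable_fst.aemeasurable
      (f := Prod.fst) (μ := ν₁.prod ν₂)).mp (by rwa [hmfst])
    exact this
  have hsnd : Integrable (fun p : ℝ × ℝ => |p.2| ^ r) (ν₁.prod ν₂) := by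
    have hmsnd : (ν₁.prod ν₂).map Prod.snd = ν₂ := by
      rw [Measure.map_snd_prod]; simp
    exact (integrable_map_measure hcr.aestronglyMeasurable measurable_snd.aemeasurable
      (f := Prod.snd) (μ := ν₁.prod ν₂)).mp (by rwa [hmsnd])
  have hprod : Integrable (fun p : ℝ × ℝ => |p.1 + p.2| ^ r) (ν₁.prod ν₂) := by
    apply Integrable.mono' (((hfst.add hsnd).const_mul ((2:ℝ) ^ r)))
      hmeasF.aestronglyMeasurable
    filter_upwards with p
    rw [Real.norm_of_nonneg (Real.rpow_nonneg (abs_nonneg _) r)]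
    exact vbe_rpow_add_bound hr1 p.1 p.2
  -- rewrite everything through maps
  have e1 : ∫ ω, |f ω + g ω| ^ r ∂μ = ∫ p : ℝ × ℝ, |p.1 + p.2| ^ r ∂(ν₁.prod ν₂) := by
    rw [← hmap, integral_map (hf.aemeasurable.prodMk hg.aemeasurable)
      hmeasF.aestronglyMeasurable]
  have e2 : ∫ ω, |f ω| ^ r ∂μ = ∫ x, |x| ^ r ∂ν₁ := by
    rw [hν₁, integral_map hf.aemeasurable hcr.aestronglyMeasurable]
  have e3 : ∫ ω, |g ω| ^ r ∂μ = ∫ y, |y| ^ r ∂ν₂ := by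
    rw [hν₂, integral_map hg.aemeasurable hcr.aestronglyMeasurable]
  rw [e1, e2, e3, MeasureTheory.integral_prod _ hprod]
  have inner : ∀ x : ℝ, ∫ y, |x + y| ^ r ∂ν₂ ≤ |x| ^ r + 2 * ∫ y, |y| ^ r ∂ν₂ := by
    intro x
    have hm1 : AEStronglyMeasurable (fun y : ℝ => |x + y| ^ r) ν₂ :=
      (hcr.comp (continuous_const.add continuous_id)).aestronglyMeasurable
    have hbd : Integrable (fun y : ℝ => (2:ℝ) ^ r * (|x| ^ r + |y| ^ r)) ν₂ :=
      ((integrable_const (|x| ^ r)).add hν₂r).const_mul ((2:ℝ) ^ r)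
    have hint1 : Integrable (fun y => |x + y| ^ r) ν₂ := by
      apply Integrable.mono' hbd hm1
      filter_upwards with y
      rw [Real.norm_of_nonneg (Real.rpow_nonneg (abs_nonneg _) r)]
      exact vbe_rpow_add_bound hr1 x y
    have hA1 : Integrable (fun _ : ℝ => |x| ^ r) ν₂ := integrable_const _
    have hA2 : Integrable (fun y : ℝ => r * Real.sign x * |x| ^ (r-1) * y) ν₂ :=
      hν₂id.const_mul _
    have hA : Integrable (fun y : ℝ => |x| ^ r + r * Real.sign x * |x| ^ (r-1) * y) ν₂ :=
      hA1.add hA2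
    have hB : Integrable (fun y : ℝ => 2 * |y| ^ r) ν₂ := hν₂r.const_mul 2
    have hAB : Integrable
        (fun y : ℝ => |x| ^ r + r * Real.sign x * |x| ^ (r-1) * y + 2 * |y| ^ r) ν₂ :=
      hA.add hB
    have hle := integral_mono hint1 hAB (fun y => vbe_pointwise hr1 hr2 x y)
    rw [integral_add hA hB, integral_add hA1 hA2, integral_const, integral_const_mul,
      integral_const_mul, hν₂mean] at hle
    simpa using hle
  have houter : Integrable (fun x => ∫ y, |x + y| ^ r ∂ν₂) ν₁ := by
    have := hprod.integral_prod_left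
    simpa using this
  calc ∫ x, ∫ y, |x + y| ^ r ∂ν₂ ∂ν₁
      ≤ ∫ x, (|x| ^ r + 2 * ∫ y, |y| ^ r ∂ν₂) ∂ν₁ :=
        integral_mono houter (hν₁r.add (integrable_const _)) inner
    _ = ∫ x, |x| ^ r ∂ν₁ + 2 * ∫ y, |y| ^ r ∂ν₂ := by
        rw [integral_add hν₁r (integrable_const _), integral_const]
        simp

/-- The von Bahr–Esseen inequality: for `1 ≤ r ≤ 2` and independent centered random
variables `X₁, …, Xₙ` with finite `r`-th absolute moments,
`E|X₁ + ⋯ + Xₙ|^r ≤ 2 ∑ₖ E|Xₖ|^r`. -/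
theorem von_bahr_esseen {Ω : Type*} [MeasurableSpace Ω]
    (μ : Measure Ω) [IsProbabilityMeasure μ]
    (r : ℝ) (hr1 : 1 ≤ r) (hr2 : r ≤ 2)
    (n : ℕ) (X : Fin n → Ω → ℝ)
    (hmeas : ∀ k, Measurable (X k))
    (hindep : iIndepFun X μ)
    (hmean : ∀ k, ∫ ω, X k ω ∂μ = 0)
    (hint : ∀ k, Integrable (fun ω => |X k ω| ^ r) μ) :
    ∫ ω, |∑ k, X k ω| ^ r ∂μ ≤ 2 * ∑ k, ∫ ω, |X k ω| ^ r ∂μ := by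
  have hr0 : (0:ℝ) < r := by linarith
  have hcr : Continuous (fun x : ℝ => |x| ^ r) := (vbe_cont_rpow hr1).comp continuous_abs
  -- integrability of each X k
  have hXi : ∀ k, Integrable (X k) μ := by
    intro k
    have hbd : Integrable (fun ω => 1 + |X k ω| ^ r) μ := (integrable_const 1).add (hint k)
    apply Integrable.mono' hbd (hmeas k).aestronglyMeasurable
    filter_upwards with ω
    rw [Real.norm_eq_abs]
    rcases le_or_gt (|X k ω|) 1 with h | h
    · have := Real.rpow_nonneg (abs_nonneg (X k ω)) r
      linarith
    · have h1 : |X k ω| ^ (1:ℝ) ≤ |X k ω| ^ r :=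
        Real.rpow_le_rpow_of_exponent_le h.le hr1
      rw [Real.rpow_one] at h1
      linarith
  have key : ∀ s : Finset (Fin n),
      Integrable (fun ω => |∑ k ∈ s, X k ω| ^ r) μ ∧
      ∫ ω, |∑ k ∈ s, X k ω| ^ r ∂μ ≤ 2 * ∑ k ∈ s, ∫ ω, |X k ω| ^ r ∂μ := by
    intro s
    induction s using Finset.induction_on with
    | empty =>
      constructor
      · simp only [Finset.sum_empty, abs_zero, Real.zero_rpow hr0.ne']
        exact integrable_const 0
      · simp [Real.zero_rpow hr0.ne']
    | @insert k s hk ih =>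
      have hsum_meas : Measurable (fun ω => ∑ j ∈ s, X j ω) := by
        exact Finset.measurable_sum s (fun i _ => hmeas i)
      have hindep' : IndepFun (fun ω => ∑ j ∈ s, X j ω) (X k) μ := by
        have h := hindep.indepFun_finsetSum_of_notMem hmeas hk
        have e : (∑ j ∈ s, X j) = fun ω => ∑ j ∈ s, X j ω := by
          ext ω; simp
        rwa [e] at h
      have hstep := vbe_step μ hr1 hr2 hsum_meas (hmeas k) hindep' (hmean k) (hXi k)
        ih.1 (hint k)
      have hrw : ∀ ω, ∑ j ∈ insert k s, X j ω = (∑ j ∈ s, X j ω) + X k ω := by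
        intro ω
        rw [Finset.sum_insert hk]
        ring
      constructor
      · have hm : AEStronglyMeasurable (fun ω => |∑ j ∈ insert k s, X j ω| ^ r) μ :=
          (hcr.measurable.comp (Finset.measurable_sum _ (fun i _ => hmeas i))).aestronglyMeasurable
        have hbd2 : Integrable
            (fun ω => (2:ℝ) ^ r * (|∑ j ∈ s, X j ω| ^ r + |X k ω| ^ r)) μ :=
          (ih.1.add (hint k)).const_mul ((2:ℝ) ^ r)
        apply Integrable.mono' hbd2 hm
        filter_upwards with ω
        rw [Real.norm_of_nonneg (Real.rpow_nonneg (abs_nonneg _) r), hrw ω]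
        exact vbe_rpow_add_bound hr1 _ _
      · have e : ∫ ω, |∑ j ∈ insert k s, X j ω| ^ r ∂μ
            = ∫ ω, |(∑ j ∈ s, X j ω) + X k ω| ^ r ∂μ := by
          congr 1
          ext ω
          rw [hrw ω]
        rw [e, Finset.sum_insert hk]
        have := ih.2
        linarith [hstep]
  have := (key Finset.univ).2
  simpa using this
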